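/- An orthogonal matrix M with det M = 1 is a product of elementary rotation matrices, where an elementary rotation matrix acts as a 2×2 rotation in one coordinate plane and as the identity elsewhere. -/

import Mathlib

/-- The elementary rotation matrix of ℝⁿ rotating the coordinate two-plane
    spanned by `e k`, `e l` by angle θ and fixing the other coordinates. -/
noncomputable def elemRot (n : ℕ) (k l : Fin n) (θ : ℝ) : Matrix (Fin n) (Fin n) ℝ :=
  Matrix.of fun i j =>
    if i = k ∧ j = k then Real.cos θ
    else if i = k ∧ j = l then -Real.sin θ
    else if i = l ∧ j = k then Real.sin θ
    else if i = l ∧ j = l then Real.cos θ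
    else if i = j then 1 else 0

namespace RotAux
open Matrix Real
variable {n : ℕ}

lemma elemRot_mul_apply {k l : Fin n} (hkl : k ≠ l) (θ : ℝ) (M : Matrix (Fin n) (Fin n) ℝ)
    (i c : Fin n) :
    (elemRot n k l θ * M) i c =
      if i = k then Real.cos θ * M k c - Real.sin θ * M l c
      else if i = l then Real.sin θ * M k c + Real.cos θ * M l c
      else M i c := by
  rw [Matrix.mul_apply]
  by_cases hik : i = k
  · subst hik
    rw [if_pos rfl]
    have h : ∀ x, elemRot n i l θ i x * M x c =
        (if x = i then Real.cos θ * M i c else 0) + (if x = l then -Real.sin θ * M l c else 0) := by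
      intro x
      by_cases h1 : x = i
      · subst h1; simp [elemRot, hkl]
      · by_cases h2 : x = l
        · subst h2; simp [elemRot, h1, hkl, Ne.symm hkl]
        · simp [elemRot, h1, h2, Ne.symm h1, hkl]
    simp only [h, Finset.sum_add_distrib, Finset.sum_ite_eq', Finset.mem_univ, if_true]
    ring
  · by_cases hil : i = l
    · subst hil
      rw [if_neg hik, if_pos rfl]
      have h : ∀ x, elemRot n k i θ i x * M x c =
          (if x = k then Real.sin θ * M k c else 0) + (if x = i then Real.cos θ * M i c else 0) := by
        intro x
        by_cases h1 : x = k
        · subst h1; simp [elemRot, hik, Ne.symm hik]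
        · by_cases h2 : x = i
          · subst h2; simp [elemRot, hik, Ne.symm hik, h1]
          · simp [elemRot, h1, h2, Ne.symm h2, hik, Ne.symm hik]
      simp only [h, Finset.sum_add_distrib, Finset.sum_ite_eq', Finset.mem_univ, if_true]
    · rw [if_neg hik, if_neg hil]
      have h : ∀ x, elemRot n k l θ i x * M x c = (if x = i then M i c else 0) := by
        intro x
        by_cases h1 : x = i
        · subst h1; simp [elemRot, hik, hil]
        · simp [elemRot, h1, Ne.symm h1, hik, hil]
      simp [h]

end RotAux
namespace RotAux
open Matrix Real
variable {n : ℕ}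

lemma elemRot_apply {k l : Fin n} (hkl : k ≠ l) (θ : ℝ) (i j : Fin n) :
    elemRot n k l θ i j =
      if i = k then (if j = k then Real.cos θ else if j = l then -Real.sin θ else 0)
      else if i = l then (if j = k then Real.sin θ else if j = l then Real.cos θ else 0)
      else (if i = j then 1 else 0) := by
  by_cases h1 : i = k <;> by_cases h2 : i = l <;> by_cases h3 : j = k <;> by_cases h4 : j = l <;>
    simp_all [elemRot] <;> simp_all [eq_comm]

lemma elemRot_add {k l : Fin n} (hkl : k ≠ l) (θ φ : ℝ) :
    elemRot n k l θ * elemRot n k l φ = elemRot n k l (θ + φ) := by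
  ext i j
  rw [elemRot_mul_apply hkl]
  by_cases h1 : i = k <;> by_cases h2 : i = l <;> by_cases h3 : j = k <;> by_cases h4 : j = l <;>
    simp_all [elemRot_apply hkl, Real.cos_add, Real.sin_add, hkl, Ne.symm hkl] <;>
    first | ring | simp_all [eq_comm]

lemma elemRot_zero {k l : Fin n} (hkl : k ≠ l) : elemRot n k l 0 = 1 := by
  ext i j
  rw [elemRot_apply hkl, Matrix.one_apply]
  by_cases h1 : i = k <;> by_cases h2 : i = l <;> by_cases h3 : j = k <;> by_cases h4 : j = l <;>
    simp_all [hkl, Ne.symm hkl] <;> simp [Ne.symm h3, Ne.symm h4]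

lemma elemRot_transpose {k l : Fin n} (hkl : k ≠ l) (θ : ℝ) :
    (elemRot n k l θ)ᵀ = elemRot n k l (-θ) := by
  ext i j
  rw [Matrix.transpose_apply, elemRot_apply hkl, elemRot_apply hkl]
  by_cases h1 : i = k <;> by_cases h2 : i = l <;> by_cases h3 : j = k <;> by_cases h4 : j = l <;>
    by_cases h5 : i = j <;> simp_all [hkl, Ne.symm hkl] <;> simp_all [eq_comm]

lemma elemRot_orth {k l : Fin n} (hkl : k ≠ l) (θ : ℝ) :
    elemRot n k l θ * (elemRot n k l θ)ᵀ = 1 := by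
  rw [elemRot_transpose hkl, elemRot_add hkl, add_neg_cancel, elemRot_zero hkl]

lemma elemRot_det {k l : Fin n} (hkl : k ≠ l) (θ : ℝ) :
    (elemRot n k l θ).det = 1 := by
  have h1 : (elemRot n k l θ).det * (elemRot n k l θ).det = 1 := by
    have := congrArg Matrix.det (elemRot_orth hkl θ)
    rwa [Matrix.det_mul, Matrix.det_transpose, Matrix.det_one] at this
  have h2 : (0:ℝ) ≤ (elemRot n k l θ).det := by
    have : elemRot n k l (θ/2) * elemRot n k l (θ/2) = elemRot n k l θ := by
      rw [elemRot_add hkl]; norm_num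
    calc (0:ℝ) ≤ (elemRot n k l (θ/2)).det * (elemRot n k l (θ/2)).det := mul_self_nonneg _
    _ = (elemRot n k l θ).det := by rw [← Matrix.det_mul, this]
  rcases mul_self_eq_one_iff.mp h1 with h | h
  · exact h
  · linarith

end RotAux
namespace RotAux
open Matrix Real
variable {n : ℕ}

def IsRotProd (A : Matrix (Fin n) (Fin n) ℝ) : Prop :=
  ∃ L : List (Matrix (Fin n) (Fin n) ℝ),
    (∀ B ∈ L, ∃ (k l : Fin n) (θ : ℝ), k ≠ l ∧ B = elemRot n k l θ) ∧ A = L.prod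

lemma isRotProd_one : IsRotProd (1 : Matrix (Fin n) (Fin n) ℝ) := ⟨[], by simp, by simp⟩

lemma isRotProd_elemRot {k l : Fin n} (hkl : k ≠ l) (θ : ℝ) : IsRotProd (elemRot n k l θ) :=
  ⟨[elemRot n k l θ], by
    intro B hB
    rw [List.mem_singleton] at hB
    exact ⟨k, l, θ, hkl, hB⟩, by simp⟩

lemma IsRotProd.mul {A B : Matrix (Fin n) (Fin n) ℝ} (hA : IsRotProd A) (hB : IsRotProd B) :
    IsRotProd (A * B) := by
  obtain ⟨L1, h1, rfl⟩ := hA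
  obtain ⟨L2, h2, rfl⟩ := hB
  refine ⟨L1 ++ L2, ?_, by rw [List.prod_append]⟩
  intro C hC
  rcases List.mem_append.mp hC with h | h
  exacts [h1 C h, h2 C h]

lemma IsRotProd.det {A : Matrix (Fin n) (Fin n) ℝ} (hA : IsRotProd A) : A.det = 1 := by
  obtain ⟨L, hL, rfl⟩ := hA
  induction L with
  | nil => simp
  | cons B T ih =>
    obtain ⟨k, l, θ, hkl, rfl⟩ := hL B (by simp)
    rw [List.prod_cons, Matrix.det_mul, elemRot_det hkl, one_mul]
    exact ih fun C hC => hL C (by simp [hC])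

/-- pair: G together with a rotation-product left inverse -/
def RotPair (G H : Matrix (Fin n) (Fin n) ℝ) : Prop :=
  IsRotProd G ∧ IsRotProd H ∧ H * G = 1

lemma rotPair_one : RotPair (1 : Matrix (Fin n) (Fin n) ℝ) 1 :=
  ⟨isRotProd_one, isRotProd_one, by simp⟩

lemma rotPair_elemRot {k l : Fin n} (hkl : k ≠ l) (θ : ℝ) :
    RotPair (elemRot n k l θ) (elemRot n k l (-θ)) :=
  ⟨isRotProd_elemRot hkl θ, isRotProd_elemRot hkl (-θ), by
    rw [elemRot_add hkl, neg_add_cancel, elemRot_zero hkl]⟩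

lemma RotPair.mul {G1 H1 G2 H2 : Matrix (Fin n) (Fin n) ℝ}
    (h1 : RotPair G1 H1) (h2 : RotPair G2 H2) : RotPair (G2 * G1) (H1 * H2) := by
  refine ⟨h2.1.mul h1.1, h1.2.1.mul h2.2.1, ?_⟩
  calc H1 * H2 * (G2 * G1) = H1 * (H2 * G2) * G1 := by noncomm_ring
  _ = 1 := by rw [h2.2.2, mul_one, h1.2.2]

def Orth (M : Matrix (Fin n) (Fin n) ℝ) : Prop := M * Mᵀ = 1

lemma Orth.mul {G M : Matrix (Fin n) (Fin n) ℝ} (hG : Orth G) (hM : Orth M) : Orth (G * M) := by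
  unfold Orth at *
  rw [Matrix.transpose_mul, show G * M * (Mᵀ * Gᵀ) = G * (M * Mᵀ) * Gᵀ by noncomm_ring, hM,
    mul_one, hG]

lemma Orth.elemRot {k l : Fin n} (hkl : k ≠ l) (θ : ℝ) : Orth (elemRot n k l θ) :=
  elemRot_orth hkl θ

/-- row norm-type lemma: if column c of an orthogonal M equals e_c then row c equals e_c. -/
lemma row_of_col {M : Matrix (Fin n) (Fin n) ℝ} (hM : Orth M) (c : Fin n)
    (hc : ∀ i, M i c = if i = c then 1 else 0) (j : Fin n) :
    M c j = if c = j then 1 else 0 := by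
  have hrow : ∑ x, M c x * M c x = 1 := by
    have := congrFun (congrFun hM c) c
    simpa [Matrix.mul_apply, Matrix.one_apply] using this
  have hcc : M c c = 1 := by simpa using hc c
  have hsplit : M c c * M c c + ∑ x ∈ Finset.univ.erase c, M c x * M c x = 1 := by
    rw [Finset.add_sum_erase _ (fun x => M c x * M c x) (Finset.mem_univ c)]; exact hrow
  have hzero : ∀ x ∈ Finset.univ.erase c, M c x * M c x = 0 := by
    rw [← Finset.sum_eq_zero_iff_of_nonneg (fun i _ => mul_self_nonneg _)]
    rw [hcc] at hsplit; linarith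
  by_cases h : c = j
  · subst h; simp [hcc]
  · rw [if_neg h]
    have := hzero j (Finset.mem_erase.mpr ⟨fun hh => h hh.symm, Finset.mem_univ _⟩)
    exact mul_self_eq_zero.mp this

end RotAux
namespace RotAux
open Matrix Real
variable {n : ℕ}

def Pcols (j : ℕ) (M : Matrix (Fin n) (Fin n) ℝ) : Prop :=
  ∀ c i : Fin n, (c : ℕ) < j → M i c = if i = c then 1 else 0

lemma pivot_pm {M : Matrix (Fin n) (Fin n) ℝ} (hM : Orth M) (j : Fin n)
    (hz : ∀ i, i ≠ j → M i j = 0) : M j j = 1 ∨ M j j = -1 := by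
  have hMtM : Mᵀ * M = 1 := mul_eq_one_comm.mp hM
  have hcol : ∑ x, M x j * M x j = 1 := by
    have := congrFun (congrFun hMtM j) j
    simpa [Matrix.mul_apply, Matrix.one_apply] using this
  have hsum : ∑ x, M x j * M x j = M j j * M j j := by
    refine Finset.sum_eq_single j (fun x _ hx => ?_) (by simp)
    rw [hz x hx, mul_zero]
  rw [hsum] at hcol
  exact mul_self_eq_one_iff.mp hcol

/-- One Givens rotation step: kill entry (i0, j). -/
lemma rotstep {M : Matrix (Fin n) (Fin n) ℝ} (hM : Orth M) (j i0 : Fin n) (hij : j ≠ i0) :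
    ∃ G H, RotPair G H ∧ Orth (G * M) ∧ (G * M) i0 j = 0 ∧
      (∀ r, r ≠ j → r ≠ i0 → ∀ c, (G * M) r c = M r c) ∧
      (∀ c, M j c = 0 → M i0 c = 0 → (G * M) j c = 0 ∧ (G * M) i0 c = 0) := by
  by_cases hb : M i0 j = 0
  · exact ⟨1, 1, rotPair_one, by simpa using hM, by simpa using hb,
      fun r _ _ c => by simp, fun c h1 h2 => by simp [h1, h2]⟩
  · set a := M j j with ha
    set b := M i0 j with hbdef
    have hr2 : (0:ℝ) < a ^ 2 + b ^ 2 := by positivity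
    set r := Real.sqrt (a ^ 2 + b ^ 2) with hrdef
    have hr : 0 < r := Real.sqrt_pos.mpr hr2
    have hrsq : r ^ 2 = a ^ 2 + b ^ 2 := Real.sq_sqrt hr2.le
    set z : ℂ := ⟨a / r, -(b / r)⟩ with hz
    have hzre : z.re = a / r := rfl
    have hzim : z.im = -(b / r) := rfl
    have hz0 : z ≠ 0 := by
      intro h
      apply hb
      have : z.im = 0 := by rw [h]; rfl
      rw [hzim] at this
      field_simp at this
      linarith
    have habs : ‖z‖ = 1 := by
      have h1 : ‖z‖ ^ 2 = 1 := by
        rw [Complex.sq_norm, Complex.normSq_apply, hzre, hzim]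
        field_simp
        linarith [hrsq]
      have h2 : (0:ℝ) ≤ ‖z‖ := norm_nonneg _
      nlinarith
    set θ := Complex.arg z with hθ
    have hcos : Real.cos θ = a / r := by rw [hθ, Complex.cos_arg hz0, habs, hzre, div_one]
    have hsin : Real.sin θ = -(b / r) := by rw [hθ, Complex.sin_arg, habs, hzim, div_one]
    refine ⟨elemRot n j i0 θ, elemRot n j i0 (-θ), rotPair_elemRot hij θ,
      (Orth.elemRot hij θ).mul hM, ?_, ?_, ?_⟩
    · rw [elemRot_mul_apply hij, if_neg (Ne.symm hij), if_pos rfl, hcos, hsin]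
      field_simp
      ring
    · intro s hsj hsi c
      rw [elemRot_mul_apply hij, if_neg hsj, if_neg hsi]
    · intro c h1 h2
      constructor
      · rw [elemRot_mul_apply hij, if_pos rfl, h1, h2]; ring
      · rw [elemRot_mul_apply hij, if_neg (Ne.symm hij), if_pos rfl, h1, h2]; ring

end RotAux
namespace RotAux
open Matrix Real
variable {n : ℕ}

lemma clearCol (j : Fin n) (m : ℕ) {M : Matrix (Fin n) (Fin n) ℝ}
    (hM : Orth M) (hP : Pcols (j : ℕ) M) :
    ∃ G H, RotPair G H ∧ Orth (G * M) ∧ Pcols (j : ℕ) (G * M) ∧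
      ∀ i : Fin n, (i : ℕ) < m → i ≠ j → (G * M) i j = 0 := by
  induction m with
  | zero => exact ⟨1, 1, rotPair_one, by simpa using hM, by simpa using hP, by omega⟩
  | succ m ih =>
    obtain ⟨G, H, hGH, hN, hNP, hNz⟩ := ih
    set N := G * M with hNdef
    by_cases hmn : m < n
    · set i0 : Fin n := ⟨m, hmn⟩ with hi0
      have hi0v : (i0 : ℕ) = m := rfl
      by_cases hlt : m < (j : ℕ)
      · refine ⟨G, H, hGH, hN, hNP, fun i hi hij => ?_⟩
        rcases Nat.lt_succ_iff_lt_or_eq.mp hi with h | h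
        · exact hNz i h hij
        · have hrow := row_of_col hN i (fun s => hNP i s (by omega)) j
          show N i j = 0
          rw [hrow, if_neg hij]
      · by_cases hji : i0 = j
        · refine ⟨G, H, hGH, hN, hNP, fun i hi hij => ?_⟩
          rcases Nat.lt_succ_iff_lt_or_eq.mp hi with h | h
          · exact hNz i h hij
          · have hjm : (j : ℕ) = m := by
              have := congrArg Fin.val hji
              omega
            exact absurd (Fin.ext (by omega) : i = j) hij
        · obtain ⟨G', H', hGH', hN', hz', hrows', hcombo'⟩ := rotstep hN j i0 (Ne.symm hji)
          refine ⟨G' * G, H * H', hGH.mul hGH', by rwa [mul_assoc], ?_, ?_⟩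
          · intro c i hc
            rw [mul_assoc, ← hNdef]
            have hjc : N j c = 0 := by
              rw [hNP c j hc, if_neg]
              intro h
              have := congrArg Fin.val h
              omega
            have hi0c : N i0 c = 0 := by
              rw [hNP c i0 hc, if_neg]
              intro h
              have := congrArg Fin.val h
              omega
            by_cases h1 : i = j
            · rw [h1, (hcombo' c hjc hi0c).1, if_neg]
              intro h
              have := congrArg Fin.val h
              rw [h1] at *
              omega
            · by_cases h2 : i = i0
              · rw [h2, (hcombo' c hjc hi0c).2, if_neg]
                intro h
                have := congrArg Fin.val h
                omega
              · rw [hrows' i h1 h2 c]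
                exact hNP c i hc
          · intro i hi hij
            rw [mul_assoc, ← hNdef]
            rcases Nat.lt_succ_iff_lt_or_eq.mp hi with h | h
            · have h2 : i ≠ i0 := by
                intro hh
                have := congrArg Fin.val hh
                omega
              rw [hrows' i hij h2 j]
              exact hNz i h hij
            · have hii : i = i0 := Fin.ext (by omega)
              rw [hii]
              exact hz'
    · refine ⟨G, H, hGH, hN, hNP, fun i hi hij => ?_⟩
      exact hNz i (by omega) hij

end RotAux
namespace RotAux
open Matrix Real
variable {n : ℕ}

lemma signfix (j i0 : Fin n) (hij : (j : ℕ) < (i0 : ℕ)) {M : Matrix (Fin n) (Fin n) ℝ}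
    (hM : Orth M) (hP : Pcols (j : ℕ) M) (hz : ∀ i, i ≠ j → M i j = 0)
    (hneg : M j j = -1) :
    ∃ G H, RotPair G H ∧ Orth (G * M) ∧ Pcols ((j : ℕ) + 1) (G * M) := by
  have hjne : j ≠ i0 := fun h => by rw [h] at hij; omega
  refine ⟨elemRot n j i0 π, elemRot n j i0 (-π), rotPair_elemRot hjne π,
    (Orth.elemRot hjne π).mul hM, ?_⟩
  intro c i hc
  rw [elemRot_mul_apply hjne, Real.cos_pi, Real.sin_pi]
  rcases Nat.lt_succ_iff_lt_or_eq.mp hc with h | h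
  · -- column c < j : rows j, i0 have zero entries there
    have hjc : M j c = 0 := by
      rw [hP c j h, if_neg]
      intro hh; have := congrArg Fin.val hh; omega
    have hi0c : M i0 c = 0 := by
      rw [hP c i0 h, if_neg]
      intro hh; have := congrArg Fin.val hh; omega
    by_cases h1 : i = j
    · have hic : ¬ i = c := by
        intro hh
        rw [h1] at hh
        exact absurd (congrArg Fin.val hh) (by omega)
      rw [if_pos h1, hjc, hi0c, if_neg hic]
      norm_num
    · by_cases h2 : i = i0
      · have hic : ¬ i = c := by
          intro hh
          rw [h2] at hh
          exact absurd (congrArg Fin.val hh) (by omega)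
        rw [if_neg h1, if_pos h2, hjc, hi0c, if_neg hic]
        norm_num
      · rw [if_neg h1, if_neg h2]
        exact hP c i h
  · -- column c = j
    have hcj : c = j := Fin.ext (by omega)
    subst hcj
    by_cases h1 : i = c
    · rw [if_pos h1, if_pos h1, hneg]; ring
    · rw [if_neg h1, if_neg h1]
      by_cases h2 : i = i0
      · rw [if_pos h2, hneg, hz i0 (Ne.symm hjne)]
        ring
      · rw [if_neg h2]
        exact hz i h1

lemma outer (hn : 1 ≤ n) (t : ℕ) (ht : t ≤ n - 1) {M : Matrix (Fin n) (Fin n) ℝ}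
    (hM : Orth M) :
    ∃ G H, RotPair G H ∧ Orth (G * M) ∧ Pcols t (G * M) := by
  induction t with
  | zero => exact ⟨1, 1, rotPair_one, by simpa using hM, by intro c i hc; omega⟩
  | succ t ih =>
    obtain ⟨G, H, hGH, hN, hNP⟩ := ih (by omega)
    set N := G * M with hNdef
    have htn : t < n := by omega
    set j : Fin n := ⟨t, htn⟩ with hj
    have hjv : (j : ℕ) = t := rfl
    obtain ⟨G1, H1, hGH1, hN1, hNP1, hz1⟩ := clearCol j n hN (by rw [hjv]; exact hNP)
    set N1 := G1 * N with hN1def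
    have hz1' : ∀ i, i ≠ j → N1 i j = 0 := fun i hi => hz1 i i.2 hi
    rcases pivot_pm hN1 j hz1' with hpos | hneg
    · refine ⟨G1 * G, H * H1, hGH.mul hGH1, by rwa [mul_assoc], ?_⟩
      rw [mul_assoc, ← hNdef, ← hN1def]
      intro c i hc
      rcases Nat.lt_succ_iff_lt_or_eq.mp hc with h | h
      · exact hNP1 c i (by omega)
      · have hcj : c = j := Fin.ext (by omega)
        rw [hcj]
        by_cases h1 : i = j
        · rw [if_pos h1, h1]; exact hpos
        · rw [if_neg h1]; exact hz1' i h1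
    · have ht1n : t + 1 < n := by omega
      set i0 : Fin n := ⟨t + 1, ht1n⟩ with hi0
      obtain ⟨G2, H2, hGH2, hN2, hNP2⟩ :=
        signfix j i0 (by simp [hjv, hi0]) hN1 (by rw [hjv]; exact hNP1) hz1' hneg
      refine ⟨G2 * (G1 * G), (H * H1) * H2, (hGH.mul hGH1).mul hGH2, ?_, ?_⟩
      · rw [mul_assoc, mul_assoc] at *
        exact hN2
      · have : G2 * (G1 * G) * M = G2 * N1 := by
          rw [hN1def, hNdef]; noncomm_ring
        rw [this]
        rw [hjv] at hNP2
        exact hNP2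

end RotAux

/-- An orthogonal matrix of determinant 1 is a product of elementary rotation
    matrices. -/
theorem orthogonal_eq_prod_elemRot (n : ℕ) (M : Matrix (Fin n) (Fin n) ℝ)
    (horth : M * M.transpose = 1) (hdet : M.det = 1) :
    ∃ L : List (Matrix (Fin n) (Fin n) ℝ),
      (∀ A ∈ L, ∃ (k l : Fin n) (θ : ℝ), k ≠ l ∧ A = elemRot n k l θ) ∧
      M = L.prod := by
  rcases Nat.eq_zero_or_pos n with hn | hn
  · subst hn
    refine ⟨[], by simp, ?_⟩
    ext i j
    exact i.elim0
  · obtain ⟨G, H, ⟨hGrot, hHrot, hHG⟩, hN, hNP⟩ :=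
      RotAux.outer hn (n - 1) le_rfl (M := M) horth
    set N := G * M with hNdef
    set last : Fin n := ⟨n - 1, by omega⟩ with hlast
    have hlastv : (last : ℕ) = n - 1 := rfl
    have hz : ∀ i, i ≠ last → N i last = 0 := by
      intro i hi
      have hilt : (i : ℕ) < n - 1 := by
        rcases Nat.lt_or_ge (i : ℕ) (n - 1) with h | h
        · exact h
        · exact absurd (Fin.ext (by have := i.2; omega) : i = last) hi
      have hrow := RotAux.row_of_col hN i (fun s => hNP i s hilt) last
      rw [hrow, if_neg hi]
    have hpm := RotAux.pivot_pm hN last hz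
    have hdetN : N.det = 1 := by
      rw [hNdef, Matrix.det_mul, hGrot.det, hdet, one_mul]
    have hdiag : N = Matrix.diagonal (fun i => if i = last then N last last else 1) := by
      ext i c
      by_cases h : i = c
      · rw [h, Matrix.diagonal_apply_eq]
        by_cases h2 : c = last
        · rw [if_pos h2, h2]
        · have hclt : (c : ℕ) < n - 1 := by
            have hne : (c : ℕ) ≠ n - 1 := fun hh => h2 (Fin.ext (by omega))
            have := c.2; omega
          rw [if_neg h2]
          have := hNP c c hclt
          simpa using this
      · rw [Matrix.diagonal_apply_ne _ h]
        by_cases h2 : c = last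
        · rw [h2]
          exact hz i (by rw [← h2]; exact h)
        · have hclt : (c : ℕ) < n - 1 := by
            have hne : (c : ℕ) ≠ n - 1 := fun hh => h2 (Fin.ext (by omega))
            have := c.2; omega
          rw [hNP c i hclt, if_neg h]
    have hdd : N last last = 1 := by
      have hdet2 : N.det = N last last := by
        conv_lhs => rw [hdiag]
        rw [Matrix.det_diagonal]
        rw [Finset.prod_eq_single last (fun x _ hx => if_neg hx) (by simp), if_pos rfl]
      rw [hdetN] at hdet2
      exact hdet2.symm
    have hN1 : N = 1 := by
      rw [hdiag, hdd]
      have hfun : (fun i : Fin n => if i = last then (1 : ℝ) else 1) = fun _ => 1 := by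
        funext i; split_ifs <;> rfl
      rw [hfun, Matrix.diagonal_one]
    have hMH : M = H := by
      calc M = 1 * M := (one_mul M).symm
      _ = H * G * M := by rw [hHG]
      _ = H * N := by rw [mul_assoc, ← hNdef]
      _ = H := by rw [hN1, mul_one]
    obtain ⟨L, hL, hHL⟩ := hHrot
    exact ⟨L, hL, by rw [hMH, hHL]⟩
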